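/- Let a₁, a₂, b₁, b₂ > 0 and define θ* ∈ [0,π] as follows: θ* = 0 if |a₂ − b₂| > a₁ + b₁; θ* = π if |a₁ − b₁| > a₂ + b₂; and otherwise θ* = arccos( (a₂² + b₂² − a₁² − b₁²) / (2(a₁b₁ + a₂b₂)) ) — in the last case the argument of arccos lies in [−1,1], so θ* is well defined. Then ∫₀^{2π} ∫₀^{2π} ln | a₁ + b₁ e^{iθ} + (b₂ − a₂ e^{iθ}) e^{iφ} | dφ dθ = 2π ∫_{−θ*}^{θ*} ln | a₁ + b₁ e^{iθ} | dθ + 2π ∫_{−π+θ*}^{π−θ*} ln | b₂ + a₂ e^{iθ} | dθ. -/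

import Mathlib

open Real MeasureTheory intervalIntegral Set Metric

lemma inner_lt (c d : ℂ) (h : ‖d‖ < ‖c‖) :
    ∫ φ in (0:ℝ)..(2*π), Real.log (‖(c + d * Complex.exp (φ * Complex.I))‖)
      = 2*π*Real.log (‖c‖) := by
  have hc0 : 0 < ‖c‖ := (norm_nonneg d).trans_lt h
  have hc : c ≠ 0 := by simpa using hc0.ne'
  set w : ℂ := d / c with hw
  have hw1 : ‖w‖ < 1 := by
    rw [hw, norm_div, div_lt_one hc0]; exact h
  set G : ℂ → ℂ := fun z => Complex.log c + Complex.log (1 + w * z) with hG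
  have hdiff : ∀ z ∈ closedBall (0:ℂ) 1, DifferentiableAt ℂ G z := by
    intro z hz
    simp only [mem_closedBall, dist_zero_right] at hz
    have hre : 0 < (1 + w * z).re := by
      have : ‖(w * z)‖ < 1 := by
        rw [norm_mul]
        calc ‖w‖ * ‖z‖ ≤ ‖w‖ * 1 :=
          mul_le_mul_of_nonneg_left hz (by positivity)
        _ < 1 := by simpa using hw1
      have := (Complex.abs_re_le_norm (w * z)).trans this.le
      have h2 : -(w*z).re ≤ |(w*z).re| := neg_le_abs _
      simp only [Complex.add_re, Complex.one_re]
      have : ‖(w*z)‖ < 1 := by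
        rw [norm_mul]
        calc ‖w‖ * ‖z‖ ≤ ‖w‖ * 1 :=
          mul_le_mul_of_nonneg_left hz (by positivity)
        _ < 1 := by simpa using hw1
      nlinarith [neg_abs_le (w*z).re, Complex.abs_re_le_norm (w*z)]
    exact (differentiableAt_const _).add
      (((differentiableAt_const _).add ((differentiableAt_const _).mul differentiableAt_id)).clog
        (Or.inl hre))
  have hG0 : G 0 = Complex.log c := by simp [hG]
  have hcauchy : (∮ z in C(0, 1), (z - 0)⁻¹ • G z) = (2 * π * Complex.I : ℂ) • G 0 := by
    apply DiffContOnCl.circleIntegral_sub_inv_smul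
    · apply DifferentiableOn.diffContOnCl
      rw [closure_ball (0:ℂ) one_ne_zero]
      exact fun z hz => (hdiff z hz).differentiableWithinAt
    · simp
  have hcirc : (∮ z in C(0, 1), (z - 0)⁻¹ • G z)
      = ∫ θ in (0:ℝ)..(2*π), Complex.I * G (Complex.exp (θ * Complex.I)) := by
    rw [circleIntegral]
    apply intervalIntegral.integral_congr
    intro θ _
    have hne : Complex.exp (θ * Complex.I) ≠ 0 := Complex.exp_ne_zero _
    simp [deriv_circleMap, circleMap, smul_eq_mul]
    field_simp
  have hmean : (∫ θ in (0:ℝ)..(2*π), G (Complex.exp (θ * Complex.I)))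
      = (2 * π : ℂ) * Complex.log c := by
    have hI : (Complex.I : ℂ) ≠ 0 := Complex.I_ne_zero
    have := hcauchy
    rw [hcirc, intervalIntegral.integral_const_mul, hG0, smul_eq_mul] at this
    have h2 : Complex.I * ((2*π:ℂ) * Complex.log c) = 2 * ↑π * Complex.I * Complex.log c := by ring
    rw [← h2] at this
    exact mul_left_cancel₀ hI this
  have hcont : Continuous (fun θ : ℝ => G (Complex.exp (θ * Complex.I))) := by
    apply continuous_iff_continuousAt.mpr
    intro θ
    have h1 : Complex.exp (θ * Complex.I) ∈ closedBall (0:ℂ) 1 := by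
      simp [Complex.norm_exp_ofReal_mul_I]
    exact ContinuousAt.comp (g := G) ((hdiff _ h1).continuousAt)
      (by fun_prop : Continuous (fun θ : ℝ => Complex.exp ((θ:ℂ) * Complex.I))).continuousAt
  have hre : ∀ θ : ℝ, Real.log (‖(c + d * Complex.exp (θ * Complex.I))‖)
      = (G (Complex.exp (θ * Complex.I))).re := by
    intro θ
    have hfac : c + d * Complex.exp (θ * Complex.I)
        = c * (1 + w * Complex.exp (θ * Complex.I)) := by
      rw [hw]; field_simp
    have hre2 : 0 < (1 + w * Complex.exp (θ * Complex.I)).re := by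
      have habs : ‖(w * Complex.exp (θ * Complex.I))‖ < 1 := by
        rw [norm_mul, Complex.norm_exp_ofReal_mul_I, mul_one]; exact hw1
      simp only [Complex.add_re, Complex.one_re]
      nlinarith [neg_abs_le (w * Complex.exp (θ * Complex.I)).re,
        Complex.abs_re_le_norm (w * Complex.exp (θ * Complex.I))]
    have hne : (1 + w * Complex.exp (θ * Complex.I)) ≠ 0 := by
      intro h0; rw [h0] at hre2; simp at hre2
    rw [hfac, norm_mul, Real.log_mul hc0.ne' (norm_ne_zero_iff.mpr hne), hG]
    simp only [Complex.add_re, Complex.log_re]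
  calc ∫ φ in (0:ℝ)..(2*π), Real.log (‖(c + d * Complex.exp (φ * Complex.I))‖)
      = ∫ φ in (0:ℝ)..(2*π), Complex.reCLM (G (Complex.exp (φ * Complex.I))) := by
        apply intervalIntegral.integral_congr; intro φ _; exact hre φ
    _ = Complex.reCLM (∫ φ in (0:ℝ)..(2*π), G (Complex.exp (φ * Complex.I))) :=
        Complex.reCLM.intervalIntegral_comp_comm (hcont.intervalIntegrable _ _)
    _ = 2*π*Real.log (‖c‖) := by
        rw [hmean]
        simp [Complex.log_re]

lemma log_abs_periodic (c d : ℂ) :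
    Function.Periodic
      (fun θ : ℝ => Real.log (‖(c + d * Complex.exp ((θ:ℂ) * Complex.I))‖)) (2*π) := by
  intro x
  simp only
  rw [show ((x+2*π:ℝ):ℂ) * Complex.I = (x:ℂ) * Complex.I + 2*π*Complex.I by push_cast; ring,
    Complex.exp_add, Complex.exp_two_pi_mul_I, mul_one]

lemma inner_ne (c d : ℂ) (h : ‖c‖ ≠ ‖d‖) :
    ∫ φ in (0:ℝ)..(2*π), Real.log (‖(c + d * Complex.exp (φ * Complex.I))‖)
      = 2*π*Real.log (max (‖c‖) (‖d‖)) := by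
  rcases h.lt_or_gt with h | h
  · -- |c| < |d|
    rw [max_eq_right h.le]
    have key : ∀ φ : ℝ, ‖(c + d * Complex.exp ((φ:ℂ) * Complex.I))‖
        = ‖(d + c * Complex.exp (((-φ:ℝ):ℂ) * Complex.I))‖ := by
      intro φ
      have hmul : Complex.exp ((φ:ℂ) * Complex.I) * Complex.exp (((-φ:ℝ):ℂ) * Complex.I) = 1 := by
        rw [← Complex.exp_add, ← Complex.exp_zero]; congr 1; push_cast; ring
      have hfac : c + d * Complex.exp ((φ:ℂ) * Complex.I)
          = Complex.exp ((φ:ℂ) * Complex.I) * (d + c * Complex.exp (((-φ:ℝ):ℂ) * Complex.I)) := by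
        linear_combination (-c) * hmul
      rw [hfac, norm_mul, Complex.norm_exp_ofReal_mul_I, one_mul]
    calc ∫ φ in (0:ℝ)..(2*π), Real.log (‖(c + d * Complex.exp (φ * Complex.I))‖)
        = ∫ φ in (0:ℝ)..(2*π),
            (fun ψ : ℝ => Real.log (‖(d + c * Complex.exp ((ψ:ℂ) * Complex.I))‖)) (-φ) := by
          apply intervalIntegral.integral_congr; intro φ _; exact congrArg Real.log (key φ)
      _ = ∫ ψ in (-(2*π) : ℝ)..(-0 : ℝ),
            Real.log (‖(d + c * Complex.exp ((ψ:ℂ) * Complex.I))‖) :=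
          intervalIntegral.integral_comp_neg
            (fun ψ : ℝ => Real.log (‖(d + c * Complex.exp ((ψ:ℂ) * Complex.I))‖))
      _ = ∫ ψ in (0:ℝ)..(2*π),
            Real.log (‖(d + c * Complex.exp ((ψ:ℂ) * Complex.I))‖) := by
          have := (log_abs_periodic d c).intervalIntegral_add_eq (-(2*π)) 0
          simpa using this
      _ = 2*π*Real.log (‖d‖) := inner_lt d c h
  · rw [max_eq_left h.le]
    exact inner_lt c d h

lemma sq_abs_add' (p q θ : ℝ) :
    (‖((p:ℂ) + (q:ℂ) * Complex.exp ((θ:ℂ) * Complex.I))‖)^2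
      = p^2 + q^2 + 2*p*q*Real.cos θ := by
  rw [Complex.sq_norm, Complex.normSq_apply]
  simp [Complex.add_re, Complex.add_im, Complex.mul_re, Complex.mul_im,
    Complex.exp_ofReal_mul_I_re, Complex.exp_ofReal_mul_I_im]
  nlinarith [Real.sin_sq_add_cos_sq θ]

lemma sq_abs_sub' (p q θ : ℝ) :
    (‖((p:ℂ) - (q:ℂ) * Complex.exp ((θ:ℂ) * Complex.I))‖)^2
      = p^2 + q^2 - 2*p*q*Real.cos θ := by
  rw [Complex.sq_norm, Complex.normSq_apply]
  simp [Complex.sub_re, Complex.sub_im, Complex.mul_re, Complex.mul_im,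
    Complex.exp_ofReal_mul_I_re, Complex.exp_ofReal_mul_I_im]
  nlinarith [Real.sin_sq_add_cos_sq θ]

/-- The angle `θ*` of Appendix D: `θ* = 0` if `|a₂ − b₂| > a₁ + b₁`,
`θ* = π` if `|a₁ − b₁| > a₂ + b₂`, and otherwise
`θ* = arccos((a₂² + b₂² − a₁² − b₁²)/(2(a₁b₁ + a₂b₂)))`. -/
noncomputable def thetaStar (a₁ a₂ b₁ b₂ : ℝ) : ℝ :=
  if |a₂ - b₂| > a₁ + b₁ then 0
  else if |a₁ - b₁| > a₂ + b₂ then Real.pi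
  else Real.arccos ((a₂ ^ 2 + b₂ ^ 2 - a₁ ^ 2 - b₁ ^ 2) / (2 * (a₁ * b₁ + a₂ * b₂)))

lemma thetaStar_eq (a₁ a₂ b₁ b₂ : ℝ) (h1 : 0 < a₁) (h2 : 0 < a₂) (h3 : 0 < b₁) (h4 : 0 < b₂) :
    thetaStar a₁ a₂ b₁ b₂
      = Real.arccos ((a₂ ^ 2 + b₂ ^ 2 - a₁ ^ 2 - b₁ ^ 2) / (2 * (a₁ * b₁ + a₂ * b₂))) := by
  have hD : (0:ℝ) < 2 * (a₁ * b₁ + a₂ * b₂) := by positivity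
  unfold thetaStar
  split_ifs with hA hB
  · rw [eq_comm, Real.arccos_eq_zero, le_div_iff₀ hD]
    nlinarith [abs_nonneg (a₂ - b₂), sq_abs (a₂ - b₂)]
  · rw [eq_comm, Real.arccos_eq_pi, div_le_iff₀ hD]
    nlinarith [abs_nonneg (a₁ - b₁), sq_abs (a₁ - b₁)]
  · rfl

lemma qpos_lemma (a₁ a₂ b₁ b₂ k t : ℝ)
    (h1 : 0 < a₁) (h2 : 0 < a₂) (h3 : 0 < b₁) (h4 : 0 < b₂)
    (hkD : k * (2 * (a₁ * b₁ + a₂ * b₂)) = a₂ ^ 2 + b₂ ^ 2 - a₁ ^ 2 - b₁ ^ 2)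
    (ht : t = Real.arccos k) :
    ∀ u ∈ Set.Icc (t-π) (π-t),
      0 < ‖((b₂ : ℂ) + (a₂ : ℂ) * Complex.exp ((u:ℂ) * Complex.I))‖ := by
  have hBpos : 0 < a₂^2 + b₂^2 - 2*a₂*b₂*Real.cos t := by
    by_cases hk1 : 1 ≤ k
    · have ht0' : t = 0 := by rw [ht, Real.arccos_eq_zero.mpr hk1]
      rw [ht0', Real.cos_zero]
      have hD : (0:ℝ) < 2 * (a₁ * b₁ + a₂ * b₂) := by positivity
      nlinarith [hkD, mul_pos (add_pos h1 h3) (add_pos h1 h3),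
        mul_nonneg (by linarith : (0:ℝ) ≤ k - 1) hD.le]
    · push_neg at hk1
      by_cases hk2 : -1 < k
      · have hct : Real.cos t = k := by rw [ht, Real.cos_arccos hk2.le hk1.le]
        rw [hct]
        nlinarith [sq_nonneg (a₂ - b₂), mul_pos h2 h4]
      · push_neg at hk2
        have htpi' : t = π := by rw [ht, Real.arccos_eq_pi.mpr hk2]
        rw [htpi', Real.cos_pi]
        nlinarith [mul_pos h2 h4, sq_nonneg (a₂ + b₂)]
  intro u hu
  have habs : |u| ≤ π - t := abs_le.mpr ⟨by linarith [hu.1], hu.2⟩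
  have hmono : Real.cos (π - t) ≤ Real.cos |u| :=
    Real.cos_le_cos_of_nonneg_of_le_pi (abs_nonneg u) (by linarith [ht ▸ Real.arccos_nonneg k] : π - t ≤ π) habs
  rw [Real.cos_abs, Real.cos_pi_sub] at hmono
  have hsq := sq_abs_add' b₂ a₂ u
  have hsqpos : 0 < (‖((b₂ : ℂ) + (a₂ : ℂ) * Complex.exp ((u:ℂ) * Complex.I))‖)^2 := by
    rw [hsq]
    nlinarith [mul_pos h2 h4]
  nlinarith [norm_nonneg ((b₂ : ℂ) + (a₂ : ℂ) * Complex.exp ((u:ℂ) * Complex.I))]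

/-- for positive `a₁, a₂, b₁, b₂`, in the third case of the
definition of `θ*` the argument of `arccos` lies in `[−1,1]` (so `θ*` is well
defined), and the double integral over `[0,2π]²` of
`ln |a₁ + b₁e^{iθ} + (b₂ − a₂e^{iθ})e^{iφ}|` equals
`2π ∫_{−θ*}^{θ*} ln|a₁ + b₁e^{iθ}| dθ + 2π ∫_{−π+θ*}^{π−θ*} ln|b₂ + a₂e^{iθ}| dθ`. -/
theorem stmt_14 (a₁ a₂ b₁ b₂ : ℝ)
    (h1 : 0 < a₁) (h2 : 0 < a₂) (h3 : 0 < b₁) (h4 : 0 < b₂) :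
    (¬(|a₂ - b₂| > a₁ + b₁) → ¬(|a₁ - b₁| > a₂ + b₂) →
      (a₂ ^ 2 + b₂ ^ 2 - a₁ ^ 2 - b₁ ^ 2) / (2 * (a₁ * b₁ + a₂ * b₂))
        ∈ Set.Icc (-1 : ℝ) 1) ∧
    (∫ θ in (0 : ℝ)..(2 * π), ∫ φ in (0 : ℝ)..(2 * π),
        Real.log (‖((a₁ : ℂ) + (b₁ : ℂ) * Complex.exp (θ * Complex.I)
          + ((b₂ : ℂ) - (a₂ : ℂ) * Complex.exp (θ * Complex.I))
              * Complex.exp (φ * Complex.I))‖))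
      = 2 * π * (∫ θ in (-(thetaStar a₁ a₂ b₁ b₂))..(thetaStar a₁ a₂ b₁ b₂),
          Real.log (‖((a₁ : ℂ) + (b₁ : ℂ) * Complex.exp (θ * Complex.I))‖))
        + 2 * π * (∫ θ in (-(π - thetaStar a₁ a₂ b₁ b₂))..(π - thetaStar a₁ a₂ b₁ b₂),
          Real.log (‖((b₂ : ℂ) + (a₂ : ℂ) * Complex.exp (θ * Complex.I))‖)) := by
  have hD : (0:ℝ) < 2 * (a₁ * b₁ + a₂ * b₂) := by positivity
  constructor
  · intro hA hB
    rw [not_lt] at hA hB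
    constructor
    · rw [le_div_iff₀ hD]
      nlinarith [sq_abs (a₁ - b₁), abs_nonneg (a₁ - b₁)]
    · rw [div_le_iff₀ hD]
      nlinarith [sq_abs (a₂ - b₂), abs_nonneg (a₂ - b₂)]
  -- the integral identity
  set k : ℝ := (a₂ ^ 2 + b₂ ^ 2 - a₁ ^ 2 - b₁ ^ 2) / (2 * (a₁ * b₁ + a₂ * b₂)) with hk
  have hkD : k * (2 * (a₁ * b₁ + a₂ * b₂)) = a₂ ^ 2 + b₂ ^ 2 - a₁ ^ 2 - b₁ ^ 2 := by
    rw [hk]; field_simp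
  set t : ℝ := thetaStar a₁ a₂ b₁ b₂ with htdef
  have ht : t = Real.arccos k := thetaStar_eq a₁ a₂ b₁ b₂ h1 h2 h3 h4
  clear_value k
  clear_value t
  have ht0 : 0 ≤ t := ht ▸ Real.arccos_nonneg k
  have htpi : t ≤ π := ht ▸ Real.arccos_le_pi k
  have hcmp : ∀ θ : ℝ,
      (‖((a₁ : ℂ) + (b₁ : ℂ) * Complex.exp ((θ:ℂ) * Complex.I))‖)^2
        - (‖((b₂ : ℂ) - (a₂ : ℂ) * Complex.exp ((θ:ℂ) * Complex.I))‖)^2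
      = 2 * (a₁ * b₁ + a₂ * b₂) * (Real.cos θ - k) := by
    intro θ
    rw [sq_abs_add', sq_abs_sub']
    nlinarith [hkD]
  have hmaxA : ∀ θ : ℝ, k ≤ Real.cos θ →
      max (‖((a₁ : ℂ) + (b₁ : ℂ) * Complex.exp ((θ:ℂ) * Complex.I))‖)
          (‖((b₂ : ℂ) - (a₂ : ℂ) * Complex.exp ((θ:ℂ) * Complex.I))‖)
        = ‖((a₁ : ℂ) + (b₁ : ℂ) * Complex.exp ((θ:ℂ) * Complex.I))‖ := by
    intro θ hθ
    refine max_eq_left (le_of_pow_le_pow_left₀ two_ne_zero (norm_nonneg _) ?_)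
    nlinarith [hcmp θ]
  have hmaxB : ∀ θ : ℝ, Real.cos θ ≤ k →
      max (‖((a₁ : ℂ) + (b₁ : ℂ) * Complex.exp ((θ:ℂ) * Complex.I))‖)
          (‖((b₂ : ℂ) - (a₂ : ℂ) * Complex.exp ((θ:ℂ) * Complex.I))‖)
        = ‖((b₂ : ℂ) - (a₂ : ℂ) * Complex.exp ((θ:ℂ) * Complex.I))‖ := by
    intro θ hθ
    refine max_eq_right (le_of_pow_le_pow_left₀ two_ne_zero (norm_nonneg _) ?_)
    nlinarith [hcmp θ]
  set g : ℝ → ℝ := fun θ => 2*π*Real.log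
      (max (‖((a₁ : ℂ) + (b₁ : ℂ) * Complex.exp ((θ:ℂ) * Complex.I))‖)
           (‖((b₂ : ℂ) - (a₂ : ℂ) * Complex.exp ((θ:ℂ) * Complex.I))‖)) with hg
  -- step 1 : a.e. identification of the inner integral
  have hnull : ∀ᵐ θ : ℝ, Real.cos θ ≠ k := by
    rw [MeasureTheory.ae_iff]
    simp only [not_not]
    by_cases hk1 : |k| ≤ 1
    · refine measure_mono_null (?_ : _ ⊆ Set.range (fun n : ℤ => Real.arccos k - 2*n*π)
        ∪ Set.range (fun n : ℤ => 2*n*π - Real.arccos k))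
        (((Set.countable_range _).union (Set.countable_range _)).measure_zero _)
      · intro θ hθ
        simp only [Set.mem_setOf_eq] at hθ
        have hc : Real.cos θ = Real.cos (Real.arccos k) := by
          rw [Real.cos_arccos (abs_le.mp hk1).1 (abs_le.mp hk1).2]; exact hθ
        simp only [Set.mem_union, Set.mem_range]
        rcases Real.cos_eq_cos_iff.mp hc with ⟨n, hn | hn⟩
        · exact Or.inl ⟨n, by linarith⟩
        · exact Or.inr ⟨n, by linarith⟩
    · convert measure_empty (μ := MeasureTheory.volume)
      rw [Set.eq_empty_iff_forall_notMem]
      intro θ hθ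
      simp only [Set.mem_setOf_eq] at hθ
      rw [← hθ] at hk1
      exact hk1 (abs_le.mpr ⟨Real.neg_one_le_cos θ, Real.cos_le_one θ⟩)
  have hFg : (∫ θ in (0 : ℝ)..(2 * π), ∫ φ in (0 : ℝ)..(2 * π),
        Real.log (‖((a₁ : ℂ) + (b₁ : ℂ) * Complex.exp (θ * Complex.I)
          + ((b₂ : ℂ) - (a₂ : ℂ) * Complex.exp (θ * Complex.I))
              * Complex.exp (φ * Complex.I))‖))
      = ∫ θ in (0 : ℝ)..(2 * π), g θ := by
    apply intervalIntegral.integral_congr_ae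
    filter_upwards [hnull] with θ hθ _
    have hne : ‖((a₁ : ℂ) + (b₁ : ℂ) * Complex.exp ((θ:ℂ) * Complex.I))‖
        ≠ ‖((b₂ : ℂ) - (a₂ : ℂ) * Complex.exp ((θ:ℂ) * Complex.I))‖ := by
      intro he
      apply hθ
      have h0 := hcmp θ
      rw [he, sub_self] at h0
      have h0' : Real.cos θ - k = 0 := by
        rcases mul_eq_zero.mp h0.symm with h | h
        · exact absurd h hD.ne'
        · exact h
      linarith
    exact inner_ne _ _ hne
  rw [hFg]
  -- step 2 : periodicity
  have hgper : Function.Periodic g (2*π) := by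
    intro x
    have he : Complex.exp (((x+2*π:ℝ):ℂ) * Complex.I) = Complex.exp ((x:ℂ)*Complex.I) := by
      rw [show ((x+2*π:ℝ):ℂ)*Complex.I = (x:ℂ)*Complex.I + 2*π*Complex.I by push_cast; ring,
        Complex.exp_add, Complex.exp_two_pi_mul_I, mul_one]
    simp only [hg, he]
  have hshift : (∫ θ in (0:ℝ)..(2*π), g θ) = ∫ θ in (-π)..π, g θ := by
    have e := hgper.intervalIntegral_add_eq 0 (-π)
    rw [zero_add] at e
    rw [e]
    congr 1
    ring
  rw [hshift]
  -- continuity of g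
  have hmaxpos : ∀ θ : ℝ, 0 <
      max (‖((a₁ : ℂ) + (b₁ : ℂ) * Complex.exp ((θ:ℂ) * Complex.I))‖)
          (‖((b₂ : ℂ) - (a₂ : ℂ) * Complex.exp ((θ:ℂ) * Complex.I))‖) := by
    intro θ
    rw [lt_max_iff]
    by_contra hcon
    push_neg at hcon
    have hA0 : ‖((a₁ : ℂ) + (b₁ : ℂ) * Complex.exp ((θ:ℂ) * Complex.I))‖ = 0 :=
      le_antisymm hcon.1 (norm_nonneg _)
    have hB0 : ‖((b₂ : ℂ) - (a₂ : ℂ) * Complex.exp ((θ:ℂ) * Complex.I))‖ = 0 :=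
      le_antisymm hcon.2 (norm_nonneg _)
    have e1 := sq_abs_add' a₁ b₁ θ
    have e2 := sq_abs_sub' b₂ a₂ θ
    rw [hA0] at e1
    rw [hB0] at e2
    norm_num at e1 e2
    have hc1 : 1 + Real.cos θ ≤ 0 := by
      nlinarith [sq_nonneg (a₁ - b₁), mul_pos h1 h3]
    have hc2 : 1 - Real.cos θ ≤ 0 := by
      nlinarith [sq_nonneg (a₂ - b₂), mul_pos h2 h4]
    linarith
  have hgcont : Continuous g := by
    apply continuous_const.mul
    apply Continuous.log
    · apply Continuous.max
      · exact continuous_norm.comp (by fun_prop)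
      · exact continuous_norm.comp (by fun_prop)
    · exact fun θ => (hmaxpos θ).ne'
  have hInt : ∀ u v : ℝ, IntervalIntegrable g MeasureTheory.volume u v :=
    fun u v => hgcont.intervalIntegrable u v
  have hsplit : (∫ θ in (-π)..π, g θ)
      = (∫ θ in (-π)..(-t), g θ) + (∫ θ in (-t)..t, g θ) + (∫ θ in t..π, g θ) := by
    have e1 := intervalIntegral.integral_add_adjacent_intervals (a := -π) (b := -t) (c := t)
      (hInt _ _) (hInt _ _)
    have e2 := intervalIntegral.integral_add_adjacent_intervals (a := -π) (b := t) (c := π)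
      (hInt _ _) (hInt _ _)
    linarith
  rw [hsplit]
  -- cos t vs k
  have hcos_lb : k < 1 → k ≤ Real.cos t := by
    intro hk1
    by_cases hk2 : -1 ≤ k
    · rw [ht, Real.cos_arccos hk2 hk1.le]
    · push_neg at hk2
      rw [ht, Real.arccos_eq_pi.mpr hk2.le, Real.cos_pi]
      linarith
  have hcos_ub : -1 < k → Real.cos t ≤ k := by
    intro hk2
    by_cases hk1 : k ≤ 1
    · rw [ht, Real.cos_arccos hk2.le hk1]
    · push_neg at hk1
      rw [ht, Real.arccos_eq_zero.mpr hk1.le, Real.cos_zero]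
      linarith
  -- middle piece
  have hmid : (∫ θ in (-t)..t, g θ)
      = 2*π * ∫ θ in (-t)..t,
          Real.log (‖((a₁ : ℂ) + (b₁ : ℂ) * Complex.exp ((θ:ℂ) * Complex.I))‖) := by
    rw [← intervalIntegral.integral_const_mul]
    by_cases hk1 : 1 ≤ k
    · have ht0' : t = 0 := by rw [ht, Real.arccos_eq_zero.mpr hk1]
      rw [ht0']
      norm_num
    · push_neg at hk1
      apply intervalIntegral.integral_congr
      intro θ hθ
      rw [Set.uIcc_of_le (by linarith : -t ≤ t)] at hθ
      have hmono : Real.cos t ≤ Real.cos |θ| :=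
        Real.cos_le_cos_of_nonneg_of_le_pi (abs_nonneg θ) htpi (abs_le.mpr ⟨hθ.1, hθ.2⟩)
      rw [Real.cos_abs] at hmono
      simp only [hg]
      rw [hmaxA θ (le_trans (hcos_lb hk1) hmono)]
  rw [hmid]
  -- right tail
  have htail_r : (∫ θ in t..π, g θ)
      = 2*π * ∫ θ in t..π,
          Real.log (‖((b₂ : ℂ) - (a₂ : ℂ) * Complex.exp ((θ:ℂ) * Complex.I))‖) := by
    rw [← intervalIntegral.integral_const_mul]
    by_cases hk2 : k ≤ -1
    · have htpi' : t = π := by rw [ht, Real.arccos_eq_pi.mpr hk2]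
      rw [htpi']
      norm_num
    · push_neg at hk2
      apply intervalIntegral.integral_congr
      intro θ hθ
      rw [Set.uIcc_of_le (by linarith : t ≤ π)] at hθ
      have hmono : Real.cos θ ≤ Real.cos t :=
        Real.cos_le_cos_of_nonneg_of_le_pi ht0 hθ.2 hθ.1
      simp only [hg]
      rw [hmaxB θ (le_trans hmono (hcos_ub hk2))]
  rw [htail_r]
  -- left tail
  have htail_l : (∫ θ in (-π)..(-t), g θ)
      = 2*π * ∫ θ in (-π)..(-t),
          Real.log (‖((b₂ : ℂ) - (a₂ : ℂ) * Complex.exp ((θ:ℂ) * Complex.I))‖) := by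
    rw [← intervalIntegral.integral_const_mul]
    by_cases hk2 : k ≤ -1
    · have htpi' : t = π := by rw [ht, Real.arccos_eq_pi.mpr hk2]
      rw [htpi']
      norm_num
    · push_neg at hk2
      apply intervalIntegral.integral_congr
      intro θ hθ
      rw [Set.uIcc_of_le (by linarith : -π ≤ -t)] at hθ
      have habs1 : |θ| ≤ π := by
        rw [abs_le]; constructor <;> linarith [hθ.1, hθ.2]
      have habs2 : t ≤ |θ| := by
        rw [le_abs]; right; linarith [hθ.2]
      have hmono : Real.cos |θ| ≤ Real.cos t :=
        Real.cos_le_cos_of_nonneg_of_le_pi ht0 habs1 habs2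
      rw [Real.cos_abs] at hmono
      simp only [hg]
      rw [hmaxB θ (le_trans hmono (hcos_ub hk2))]
  rw [htail_l]
  -- substitution u = θ ∓ π in the tails
  have hflip : ∀ u : ℝ,
      Real.log (‖((b₂ : ℂ) - (a₂ : ℂ) * Complex.exp (((u+π:ℝ):ℂ) * Complex.I))‖)
        = Real.log (‖((b₂ : ℂ) + (a₂ : ℂ) * Complex.exp ((u:ℂ) * Complex.I))‖) := by
    intro u
    congr 2
    rw [show ((u+π:ℝ):ℂ)*Complex.I = (u:ℂ)*Complex.I + π*Complex.I by push_cast; ring,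
      Complex.exp_add, Complex.exp_pi_mul_I]
    ring
  have hflip' : ∀ u : ℝ,
      Real.log (‖((b₂ : ℂ) - (a₂ : ℂ) * Complex.exp (((u-π:ℝ):ℂ) * Complex.I))‖)
        = Real.log (‖((b₂ : ℂ) + (a₂ : ℂ) * Complex.exp ((u:ℂ) * Complex.I))‖) := by
    intro u
    congr 2
    rw [show ((u-π:ℝ):ℂ)*Complex.I = (u:ℂ)*Complex.I + -((π:ℂ)*Complex.I) by push_cast; ring,
      Complex.exp_add, Complex.exp_neg, Complex.exp_pi_mul_I]
    norm_num
  -- substitution lemmas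
  have hsub_r : (∫ θ in t..π,
        Real.log (‖((b₂ : ℂ) - (a₂ : ℂ) * Complex.exp ((θ:ℂ) * Complex.I))‖))
      = ∫ u in (t-π)..(0:ℝ),
          Real.log (‖((b₂ : ℂ) + (a₂ : ℂ) * Complex.exp ((u:ℂ) * Complex.I))‖) := by
    have e := intervalIntegral.integral_comp_add_right (a := t-π) (b := 0)
      (fun θ : ℝ => Real.log (‖((b₂ : ℂ) - (a₂ : ℂ) * Complex.exp ((θ:ℂ) * Complex.I))‖)) π
    simp only [sub_add_cancel, zero_add] at e
    rw [← e]
    apply intervalIntegral.integral_congr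
    intro u _
    exact hflip u
  have hsub_l : (∫ θ in (-π)..(-t),
        Real.log (‖((b₂ : ℂ) - (a₂ : ℂ) * Complex.exp ((θ:ℂ) * Complex.I))‖))
      = ∫ u in (0:ℝ)..(π-t),
          Real.log (‖((b₂ : ℂ) + (a₂ : ℂ) * Complex.exp ((u:ℂ) * Complex.I))‖) := by
    have e := intervalIntegral.integral_comp_sub_right (a := 0) (b := π-t)
      (fun θ : ℝ => Real.log (‖((b₂ : ℂ) - (a₂ : ℂ) * Complex.exp ((θ:ℂ) * Complex.I))‖)) π
    rw [show (0:ℝ) - π = -π by ring, show π - t - π = -t by ring] at e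
    rw [← e]
    apply intervalIntegral.integral_congr
    intro u _
    exact hflip' u
  have hqpos := qpos_lemma a₁ a₂ b₁ b₂ k t h1 h2 h3 h4 hkD ht
  have hq1 : IntervalIntegrable
      (fun u : ℝ => Real.log (‖((b₂ : ℂ) + (a₂ : ℂ) * Complex.exp ((u:ℂ) * Complex.I))‖))
      MeasureTheory.volume (t-π) 0 := by
    apply ContinuousOn.intervalIntegrable
    apply ContinuousOn.log
    · exact (continuous_norm.comp (by fun_prop)).continuousOn
    · intro u hu
      rw [Set.uIcc_of_le (by linarith : t-π ≤ 0)] at hu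
      exact (hqpos u ⟨hu.1, by linarith [hu.2]⟩).ne'
  have hq2 : IntervalIntegrable
      (fun u : ℝ => Real.log (‖((b₂ : ℂ) + (a₂ : ℂ) * Complex.exp ((u:ℂ) * Complex.I))‖))
      MeasureTheory.volume 0 (π-t) := by
    apply ContinuousOn.intervalIntegrable
    apply ContinuousOn.log
    · exact (continuous_norm.comp (by fun_prop)).continuousOn
    · intro u hu
      rw [Set.uIcc_of_le (by linarith : (0:ℝ) ≤ π-t)] at hu
      exact (hqpos u ⟨by linarith [hu.1], hu.2⟩).ne'
  have hqadd := intervalIntegral.integral_add_adjacent_intervals hq1 hq2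
  rw [hsub_r, hsub_l, show -(π - t) = t - π from by ring, ← hqadd]
  ring
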